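/- Let f : U → ℝ be a function on an open set U ⊆ ℝⁿ, let Z ⊆ U be a closed set with empty interior such that f is differentiable on U ∖ Z, and suppose both f and each partial derivative ∂f/∂xᵢ (defined on U ∖ Z) extend continuously to U. If for every a ∈ U and every i the line through a parallel to the i-th axis meets Z in a discrete set, then f is C¹ on U and its partial derivatives are the continuous extensions. -/

import Mathlib

open Topology

section Aux

open Topology Filter Set Metric

/-- local version of `hasDerivAt_of_hasDerivAt_of_ne`. -/
lemma hasDerivAt_of_eventually_ne {f g : ℝ → ℝ} {x : ℝ}
    (h : ∀ᶠ y in 𝓝 x, y ≠ x → HasDerivAt f (g y) y)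
    (hf : ContinuousAt f x) (hg : ContinuousAt g x) : HasDerivAt f (g x) x := by
  obtain ⟨ε, εpos, hε⟩ := Metric.eventually_nhds_iff.mp h
  have A : HasDerivWithinAt f (g x) (Ici x) x := by
    have diff : DifferentiableOn ℝ f (Ioo x (x + ε)) := by
      intro y hy
      have : dist y x < ε := by
        rw [Real.dist_eq, abs_of_pos (sub_pos.2 hy.1)]
        linarith [hy.2]
      exact ((hε this) (ne_of_gt hy.1)).differentiableAt.differentiableWithinAt
    have hs : Ioo x (x + ε) ∈ 𝓝[>] x :=
      Ioo_mem_nhdsGT_of_mem ⟨le_refl x, by linarith⟩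
    refine hasDerivWithinAt_Ici_of_tendsto_deriv diff hf.continuousWithinAt hs ?_
    have hgt : Filter.Tendsto g (𝓝[>] x) (𝓝 (g x)) := hg.continuousWithinAt
    refine hgt.congr' ?_
    filter_upwards [hs] with y hy
    exact (((hε (by rw [Real.dist_eq, abs_of_pos (sub_pos.2 hy.1)]; linarith [hy.2]))
      (ne_of_gt hy.1)).deriv).symm
  have B : HasDerivWithinAt f (g x) (Iic x) x := by
    have diff : DifferentiableOn ℝ f (Ioo (x - ε) x) := by
      intro y hy
      have : dist y x < ε := by
        rw [Real.dist_eq, abs_of_neg (sub_neg.2 hy.2)]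
        linarith [hy.1]
      exact ((hε this) (ne_of_lt hy.2)).differentiableAt.differentiableWithinAt
    have hs : Ioo (x - ε) x ∈ 𝓝[<] x :=
      Ioo_mem_nhdsLT_of_mem ⟨by linarith, le_refl x⟩
    refine hasDerivWithinAt_Iic_of_tendsto_deriv diff hf.continuousWithinAt hs ?_
    have hgt : Filter.Tendsto g (𝓝[<] x) (𝓝 (g x)) := hg.continuousWithinAt
    refine hgt.congr' ?_
    filter_upwards [hs] with y hy
    exact (((hε (by rw [Real.dist_eq, abs_of_neg (sub_neg.2 hy.2)]; linarith [hy.1]))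
      (ne_of_lt hy.2)).deriv).symm
  have C := B.union A
  rw [Iic_union_Ici, hasDerivWithinAt_univ] at C
  exact C

section LineDeriv

variable {n : ℕ} {U Z : Set (Fin n → ℝ)} {f : (Fin n → ℝ) → ℝ} {g : Fin n → (Fin n → ℝ) → ℝ}

/-- off `Z`, the line derivative is `g i`. -/
lemma lineDeriv_offZ (hdiff : ∀ x ∈ U \ Z, DifferentiableAt ℝ f x)
    (hgd : ∀ i, ∀ x ∈ U \ Z, g i x = fderiv ℝ f x (Pi.single i 1))
    {b : Fin n → ℝ} (hb : b ∈ U \ Z) (i : Fin n) :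
    HasDerivAt (fun t => f (Function.update b i t)) (g i b) (b i) := by
  have hcurve := hasDerivAt_update b i (b i)
  have hfd : HasFDerivAt f (fderiv ℝ f b) (Function.update b i (b i)) := by
    rw [Function.update_eq_self]
    exact (hdiff b hb).hasFDerivAt
  have h := hfd.comp_hasDerivAt (b i) hcurve
  rw [hgd i b hb]
  simpa [Function.comp_def] using h

/-- everywhere on `U`, the line derivative is `g i`. -/
lemma lineDeriv_everywhere (hU : IsOpen U)
    (hdiff : ∀ x ∈ U \ Z, DifferentiableAt ℝ f x)
    (hfc : ContinuousOn f U)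
    (hgc : ∀ i, ContinuousOn (g i) U)
    (hgd : ∀ i, ∀ x ∈ U \ Z, g i x = fderiv ℝ f x (Pi.single i 1))
    (hdisc : ∀ a ∈ U, ∀ i : Fin n, ∀ t₀ : ℝ, Function.update a i t₀ ∈ Z →
      ∃ ε > 0, ∀ t : ℝ, Function.update a i t ∈ Z → |t - t₀| < ε → t = t₀)
    {a : Fin n → ℝ} (ha : a ∈ U) (i : Fin n) :
    HasDerivAt (fun t => f (Function.update a i t)) (g i a) (a i) := by
  by_cases haZ : a ∈ Z
  swap
  · exact lineDeriv_offZ hdiff hgd ⟨ha, haZ⟩ i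
  obtain ⟨ε, εpos, hε⟩ := hdisc a ha i (a i) (by rwa [Function.update_eq_self])
  obtain ⟨δ1, δ1pos, hδ1⟩ := Metric.isOpen_iff.mp hU a ha
  have hcu : ContinuousAt (fun t => Function.update a i t) (a i) :=
    (hasDerivAt_update a i (a i)).continuousAt
  have hev : ∀ᶠ y in 𝓝 (a i), y ≠ a i →
      HasDerivAt (fun t => f (Function.update a i t))
        ((fun t => g i (Function.update a i t)) y) y := by
    rw [Metric.eventually_nhds_iff]
    refine ⟨min ε δ1, lt_min εpos δ1pos, fun y hy hne => ?_⟩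
    set b := Function.update a i y with hbdef
    have hbU : b ∈ U := by
      apply hδ1
      rw [mem_ball, dist_pi_lt_iff δ1pos]
      intro j
      rcases eq_or_ne j i with rfl | hj
      · simpa [hbdef] using lt_of_lt_of_le hy (min_le_right _ _)
      · simpa [hbdef, Function.update_of_ne hj] using δ1pos
    have hbZ : b ∉ Z := fun hb =>
      hne (hε y hb (by rw [← Real.dist_eq]; exact lt_of_lt_of_le hy (min_le_left _ _)))
    have h := lineDeriv_offZ hdiff hgd ⟨hbU, hbZ⟩ i
    have h1 : (fun t => f (Function.update b i t)) = fun t => f (Function.update a i t) := by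
      funext t; rw [hbdef, Function.update_idem]
    have h2 : b i = y := Function.update_self i y a
    rw [h1, h2] at h
    exact h
  have hφ : ContinuousAt (fun t => f (Function.update a i t)) (a i) := by
    have h2 : ContinuousAt f ((fun t => Function.update a i t) (a i)) := by
      simp only [Function.update_eq_self]
      exact hfc.continuousAt (hU.mem_nhds ha)
    exact h2.comp hcu
  have hψ : ContinuousAt (fun t => g i (Function.update a i t)) (a i) := by
    have h2 : ContinuousAt (g i) ((fun t => Function.update a i t) (a i)) := by
      simp only [Function.update_eq_self]
      exact (hgc i).continuousAt (hU.mem_nhds ha)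
    exact h2.comp hcu
  have h := hasDerivAt_of_eventually_ne hev hφ hψ
  simpa [Function.update_eq_self] using h

end LineDeriv

section Main

variable {n : ℕ} {U : Set (Fin n → ℝ)} {f : (Fin n → ℝ) → ℝ} {g : Fin n → (Fin n → ℝ) → ℝ}

lemma hasFDerivAt_of_lineDeriv (hU : IsOpen U)
    (hlin : ∀ a ∈ U, ∀ i, HasDerivAt (fun t => f (Function.update a i t)) (g i a) (a i))
    (hgc : ∀ i, ContinuousOn (g i) U)
    {a : Fin n → ℝ} (ha : a ∈ U) :
    HasFDerivAt f
      (∑ i, g i a • (ContinuousLinearMap.proj i : (Fin n → ℝ) →L[ℝ] ℝ)) a := by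
  set G : (Fin n → ℝ) →L[ℝ] ℝ :=
    ∑ i, g i a • (ContinuousLinearMap.proj i : (Fin n → ℝ) →L[ℝ] ℝ) with hGdef
  rw [hasFDerivAt_iff_isLittleO, Asymptotics.isLittleO_iff]
  intro c hc
  have hcn : (0:ℝ) < c / (n + 1) := by positivity
  -- find a good ball
  have hgev : ∀ᶠ w in 𝓝 a, w ∈ U ∧ ∀ i, |g i w - g i a| ≤ c / (n + 1) := by
    rw [Filter.eventually_and]
    refine ⟨hU.mem_nhds ha, ?_⟩
    rw [Filter.eventually_all]
    intro i
    have hcont : ContinuousAt (g i) a := (hgc i).continuousAt (hU.mem_nhds ha)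
    filter_upwards [hcont (Metric.closedBall_mem_nhds (g i a) hcn)] with w hw
    simpa [Real.dist_eq] using hw
  obtain ⟨δ, δpos, hδ⟩ := Metric.eventually_nhds_iff.mp hgev
  filter_upwards [Metric.ball_mem_nhds a δpos] with y hy
  have hya : ∀ j, dist (y j) (a j) < δ :=
    fun j => lt_of_le_of_lt (dist_le_pi_dist y a j) (mem_ball.mp hy)
  -- the chain of intermediate points
  set z : ℕ → (Fin n → ℝ) := fun k j => if (j : ℕ) < k then y j else a j with hzdef
  have hz0 : z 0 = a := by funext j; simp [hzdef]
  have hzn : z n = y := by funext j; simp [hzdef, j.isLt]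
  have hzmem : ∀ (k : ℕ) (i : Fin n), ∀ t ∈ Set.uIcc (a i) (y i),
      dist (Function.update (z k) i t) a < δ := by
    intro k i t ht
    rw [dist_pi_lt_iff δpos]
    intro j
    rcases eq_or_ne j i with rfl | hj
    · rw [Function.update_self]
      exact lt_of_le_of_lt (by simpa [dist_comm] using Real.dist_left_le_of_mem_uIcc ht) (hya j)
    · rw [Function.update_of_ne hj]
      by_cases hjk : (j : ℕ) < k
      · simpa [hzdef, hjk] using hya j
      · simpa [hzdef, hjk] using δpos
  -- key per-coordinate estimate
  have key : ∀ k, ∀ hk : k < n,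
      ‖f (z (k + 1)) - f (z k) - (y ⟨k, hk⟩ - a ⟨k, hk⟩) * g ⟨k, hk⟩ a‖ ≤
        c / (n + 1) * ‖y - a‖ := by
    intro k hk
    set i : Fin n := ⟨k, hk⟩ with hidef
    have hzsucc : z (k + 1) = Function.update (z k) i (y i) := by
      funext j
      rcases eq_or_ne j i with rfl | hj
      · simp [hzdef, hidef]
      · have hjk : (j : ℕ) ≠ k := fun h => hj (Fin.ext h)
        have : ((j : ℕ) < k + 1) ↔ ((j : ℕ) < k) := by omega
        simp [hzdef, Function.update_of_ne hj, this]
    have hzk : Function.update (z k) i (a i) = z k := by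
      have h1 : z k i = a i := by simp [hzdef, hidef]
      conv_lhs => rw [← h1]
      rw [Function.update_eq_self]
    set F : ℝ → ℝ := fun u => f (Function.update (z k) i u) - u * g i a with hFdef
    have hder : ∀ t ∈ Set.uIcc (a i) (y i),
        HasDerivAt F (g i (Function.update (z k) i t) - g i a) t := by
      intro t ht
      have hb := hδ (hzmem k i t ht)
      have h1 := hlin _ hb.1 i
      have h2 : (fun u => f (Function.update (Function.update (z k) i t) i u)) =
          fun u => f (Function.update (z k) i u) := by
        funext u; rw [Function.update_idem]
      have h3 : Function.update (z k) i t i = t := Function.update_self i t (z k)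
      rw [h2, h3] at h1
      exact h1.sub (hasDerivAt_mul_const (g i a))
    have hbound : ∀ t ∈ Set.uIcc (a i) (y i),
        ‖g i (Function.update (z k) i t) - g i a‖ ≤ c / (n + 1) := by
      intro t ht
      have hb := hδ (hzmem k i t ht)
      simpa [Real.norm_eq_abs] using hb.2 i
    have hmvt := Convex.norm_image_sub_le_of_norm_hasDerivWithin_le
      (fun t ht => (hder t ht).hasDerivWithinAt) hbound (convex_uIcc _ _)
      (Set.left_mem_uIcc (a := a i) (b := y i)) (Set.right_mem_uIcc (a := a i) (b := y i))
    have hFval : F (y i) - F (a i) =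
        f (z (k + 1)) - f (z k) - (y i - a i) * g i a := by
      rw [hFdef]
      simp only [← hzsucc, hzk]
      ring
    rw [hFval] at hmvt
    refine le_trans hmvt ?_
    have : ‖y i - a i‖ ≤ ‖y - a‖ := by
      simpa using norm_le_pi_norm (y - a) i
    exact mul_le_mul_of_nonneg_left this (le_of_lt hcn)
  -- assemble
  have htel : f y - f a = ∑ k ∈ Finset.range n, (f (z (k + 1)) - f (z k)) := by
    rw [Finset.sum_range_sub (fun k => f (z k)), hz0, hzn]
  set e : ℕ → ℝ := fun k =>
    if h : k < n then (y ⟨k, h⟩ - a ⟨k, h⟩) * g ⟨k, h⟩ a else 0 with hedef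
  have hGsum : G (y - a) = ∑ k ∈ Finset.range n, e k := by
    rw [hGdef]
    rw [ContinuousLinearMap.sum_apply]
    rw [← Fin.sum_univ_eq_sum_range e n]
    refine Finset.sum_congr rfl fun i _ => ?_
    simp [hedef, ContinuousLinearMap.smul_apply, ContinuousLinearMap.proj_apply, i.isLt,
      mul_comm]
  calc ‖f y - f a - G (y - a)‖
      = ‖∑ k ∈ Finset.range n, (f (z (k + 1)) - f (z k) - e k)‖ := by
        rw [Finset.sum_sub_distrib, ← htel, ← hGsum]
    _ ≤ ∑ k ∈ Finset.range n, ‖f (z (k + 1)) - f (z k) - e k‖ := norm_sum_le _ _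
    _ ≤ ∑ _k ∈ Finset.range n, c / (n + 1) * ‖y - a‖ := by
        refine Finset.sum_le_sum fun k hk => ?_
        have hkn : k < n := Finset.mem_range.mp hk
        simpa [hedef, hkn] using key k hkn
    _ = n * (c / (n + 1) * ‖y - a‖) := by
        rw [Finset.sum_const, Finset.card_range, nsmul_eq_mul]
    _ ≤ c * ‖y - a‖ := by
        have h1 : (0:ℝ) ≤ ‖y - a‖ := norm_nonneg _
        have h2 : (0:ℝ) < (n:ℝ) + 1 := by positivity
        rw [div_mul_eq_mul_div, mul_div_assoc', ← mul_assoc]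
        rw [div_le_iff₀ h2]
        nlinarith [hc.le]

end Main

end Aux

/-- L'Hospital-type extension step: if `f` is differentiable off a closed thin set `Z`,
`f` and its partial derivatives (off `Z`) extend continuously to `U`, and every
axis-parallel line meets `Z` discretely, then `f` is `C¹` on `U` and its partial
derivatives are the continuous extensions. -/
theorem c1_of_continuous_extension_of_derivs {n : ℕ} (U Z : Set (Fin n → ℝ))
    (hU : IsOpen U) (hZU : Z ⊆ U) (hZ : IsClosed Z) (hZint : interior Z = ∅)
    (f : (Fin n → ℝ) → ℝ)
    (hdiff : ∀ x ∈ U \ Z, DifferentiableAt ℝ f x)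
    (hfc : ContinuousOn f U)
    (g : Fin n → (Fin n → ℝ) → ℝ)
    (hgc : ∀ i, ContinuousOn (g i) U)
    (hgd : ∀ i, ∀ x ∈ U \ Z, g i x = fderiv ℝ f x (Pi.single i 1))
    (hdisc : ∀ a ∈ U, ∀ i : Fin n, ∀ t₀ : ℝ, Function.update a i t₀ ∈ Z →
      ∃ ε > 0, ∀ t : ℝ, Function.update a i t ∈ Z → |t - t₀| < ε → t = t₀) :
    ContDiffOn ℝ 1 f U ∧ ∀ i, ∀ x ∈ U, fderiv ℝ f x (Pi.single i 1) = g i x := by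
  have hlin : ∀ a ∈ U, ∀ i, HasDerivAt (fun t => f (Function.update a i t)) (g i a) (a i) :=
    fun a ha i => lineDeriv_everywhere hU hdiff hfc hgc hgd hdisc ha i
  set G : (Fin n → ℝ) → (Fin n → ℝ) →L[ℝ] ℝ :=
    fun x => ∑ i, g i x • (ContinuousLinearMap.proj i : (Fin n → ℝ) →L[ℝ] ℝ) with hGdef
  have hfd : ∀ x ∈ U, HasFDerivAt f (G x) x := fun x hx =>
    hasFDerivAt_of_lineDeriv hU hlin hgc hx
  have hfderiv : ∀ x ∈ U, fderiv ℝ f x = G x := fun x hx => (hfd x hx).fderiv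
  have hGi : ∀ (i : Fin n) (x : Fin n → ℝ), G x (Pi.single i 1) = g i x := by
    intro i x
    rw [hGdef]
    simp only [ContinuousLinearMap.sum_apply, ContinuousLinearMap.smul_apply,
      ContinuousLinearMap.proj_apply, Pi.single_apply, smul_eq_mul, mul_ite, mul_one, mul_zero]
    simp
  have hGc : ContinuousOn G U := by
    rw [hGdef]
    apply continuousOn_finset_sum
    intro i _
    exact (hgc i).smul continuousOn_const
  refine ⟨?_, fun i x hx => by rw [hfderiv x hx, hGi]⟩
  have h1 : (1 : WithTop ℕ∞) = 0 + 1 := by norm_num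
  rw [h1, contDiffOn_succ_iff_fderivWithin hU.uniqueDiffOn]
  refine ⟨fun x hx => (hfd x hx).differentiableAt.differentiableWithinAt, by simp, ?_⟩
  rw [contDiffOn_zero]
  exact hGc.congr fun x hx => by rw [fderivWithin_of_isOpen hU hx, hfderiv x hx]
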